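/- arXiv:2101.06015 — 6 statements merged into one kernel-verified Lean document; each statement's English description precedes it below -/
import Mathlib

section
/- Every process or receive transition strictly decreases the weight wt(s) = Σ_{c ∈ C} N(c, π_c(s)) of the state: if s →_p s' or s →_r s', then wt(s') < wt(s). -/
structure PSN where
  Node : Type
  Chan : Type
  fintypeNode : Fintype Node
  decEqNode : DecidableEq Node
  fintypeChan : Fintype Chan
  decEqChan : DecidableEq Chan
  M : Finset Node
  hM : 2 ≤ M.card
  source : Chan → Node
  target : Chan → Node
  rout : Node → Node → Chan
  rout_source : ∀ n m, m ∈ M → m ≠ n → source (rout n m) = n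

attribute [instance] PSN.fintypeNode PSN.decEqNode PSN.fintypeChan PSN.decEqChan

namespace PSN

variable (P : PSN)

/-- A state records the content of every channel: `none` is an empty channel,
`some m` is a message destined for terminal `m`. -/
abbrev State := P.Chan → Option P.Node

/-- The next hop of a message destined for `m` at node `n`. -/
def nexthop (m n : P.Node) : P.Node := P.target (P.rout n m)

/-- The next channel for a message destined for `m` currently in channel `c`. -/
def nextC (m : P.Node) (c : P.Chan) : P.Chan := P.rout (P.target c) m

/-- The network is correct: every message can reach its destination in a
bounded number of hops. -/
def Correct : Prop := ∀ m ∈ P.M, ∀ n : P.Node, ∃ k : ℕ, (P.nexthop m)^[k] n = m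

/-- Initial states: all channels empty. -/
def init (s : P.State) : Prop := ∀ c, s c = none

/-- Send step: terminal `m` inserts a message for terminal `m' ≠ m` into the
(currently empty) channel `rout m m'`. -/
def sendStep (s s' : P.State) : Prop :=
  ∃ m m', m ∈ P.M ∧ m' ∈ P.M ∧ m ≠ m' ∧ s (P.rout m m') = none ∧
    s' = Function.update s (P.rout m m') (some m')

/-- Process step: a node forwards a message `m` from an incoming channel `c`
(with `target c ≠ m`) to the routed outgoing channel, provided it is empty. -/
def procStep (s s' : P.State) : Prop :=
  ∃ m c, m ∈ P.M ∧ s c = some m ∧ P.target c ≠ m ∧ s (P.nextC m c) = none ∧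
    s' = Function.update (Function.update s c none) (P.nextC m c) (some m)

/-- Receive step: terminal `m` removes a message destined for it from an
incoming channel. -/
def recvStep (s s' : P.State) : Prop :=
  ∃ m c, m ∈ P.M ∧ s c = some m ∧ P.target c = m ∧ s' = Function.update s c none

/-- Send, process or receive transitions. -/
def stepSPR (s s' : P.State) : Prop := P.sendStep s s' ∨ P.procStep s s' ∨ P.recvStep s s'

/-- Process or receive transitions. -/
def stepPR (s s' : P.State) : Prop := P.procStep s s' ∨ P.recvStep s s'

/-- The (total) transition relation of the Kripke structure: send, process and
receive steps, plus self-loops on otherwise-stuck states. -/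
def step (s s' : P.State) : Prop := P.stepSPR s s' ∨ (s = s' ∧ ∀ t, ¬ P.stepSPR s t)

/-- Reachable states: reachable from an initial state. -/
def reachable (s : P.State) : Prop := ∃ s₀, P.init s₀ ∧ Relation.ReflTransGen P.step s₀ s

/-- Global deadlock: no transition to a distinct state. -/
def globalDeadlock (s : P.State) : Prop := ∀ s', P.step s s' → s' = s

/-- Local deadlock at channel `c`: `c` is nonempty and keeps the same content
along every execution. -/
def localDeadlockAt (c : P.Chan) (s : P.State) : Prop :=
  ∀ s', Relation.ReflTransGen P.step s s' → s c ≠ none ∧ s' c = s c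

/-- Local deadlock: some channel is locally deadlocked. -/
def localDeadlock (s : P.State) : Prop := ∃ c, P.localDeadlockAt c s

/-- Weak deadlock: a non-initial state with no process or receive step. -/
def weakDeadlock (s : P.State) : Prop := ¬ P.init s ∧ ∀ s', ¬ P.stepPR s s'

/-- `Nval c v` is the number of hops needed for the content `v` of channel `c`
to reach its destination: `0` for the empty channel, and for a message `m`
one more than the least `l` with `target (nextC m ^[l] c) = m`. -/
noncomputable def Nval (c : P.Chan) : Option P.Node → ℕ
  | none => 0
  | some m => sInf {l | P.target ((P.nextC m)^[l] c) = m} + 1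

/-- The weight of a state: total number of hops needed for all messages
currently in the network to reach their destinations. -/
noncomputable def wt (s : P.State) : ℕ := ∑ c : P.Chan, P.Nval c (s c)

end PSN

namespace PSN

variable (P : PSN)

lemma target_iter (m : P.Node) (c : P.Chan) (l : ℕ) :
    P.target ((P.nextC m)^[l] c) = (P.nexthop m)^[l] (P.target c) := by
  induction l with
  | zero => simp
  | succ l ih =>
      rw [Function.iterate_succ_apply', Function.iterate_succ_apply', ← ih]
      rfl

lemma setNe (hc : P.Correct) (m : P.Node) (hm : m ∈ P.M) (c : P.Chan) :
    {l | P.target ((P.nextC m)^[l] c) = m}.Nonempty := by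
  obtain ⟨k, hk⟩ := hc m hm (P.target c)
  exact ⟨k, by rw [Set.mem_setOf_eq, target_iter]; exact hk⟩

lemma Nval_recv (m : P.Node) (c : P.Chan) (h : P.target c = m) :
    P.Nval c (some m) = 1 := by
  have h0 : sInf {l | P.target ((P.nextC m)^[l] c) = m} = 0 :=
    Nat.sInf_eq_zero.2 (Or.inl (by simpa using h))
  simp [Nval, h0]

lemma Nval_proc (hc : P.Correct) (m : P.Node) (hm : m ∈ P.M) (c : P.Chan)
    (h : P.target c ≠ m) :
    P.Nval (P.nextC m c) (some m) < P.Nval c (some m) := by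
  set S := {l | P.target ((P.nextC m)^[l] c) = m} with hS
  have hne := P.setNe hc m hm c
  have hmem : sInf S ∈ S := Nat.sInf_mem hne
  have h0 : sInf S ≠ 0 := by
    intro h0
    rw [h0] at hmem
    exact h hmem
  obtain ⟨j, hj⟩ := Nat.exists_eq_succ_of_ne_zero h0
  have hjS : j ∈ {l | P.target ((P.nextC m)^[l] (P.nextC m c)) = m} := by
    have := hmem
    rw [hS, Set.mem_setOf_eq, hj, Function.iterate_succ_apply] at this
    exact this
  have hle : sInf {l | P.target ((P.nextC m)^[l] (P.nextC m c)) = m} ≤ j :=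
    Nat.sInf_le hjS
  simp only [Nval, ← hS]
  rw [hj]
  omega

end PSN

/-- Every process or receive transition strictly decreases the weight of the
state. -/
theorem stmt7 (P : PSN) (hc : P.Correct) (s s' : P.State)
    (h : P.procStep s s' ∨ P.recvStep s s') :
    P.wt s' < P.wt s := by
  rcases h with ⟨m, c, hm, hsc, htc, hsc', hs'⟩ | ⟨m, c, hm, hsc, htc, hs'⟩
  · -- process step
    set c' := P.nextC m c with hc'
    have hcc' : c ≠ c' := by
      intro he; rw [← he] at hsc'; rw [hsc] at hsc'; simp at hsc'
    set g : P.Chan → ℕ := fun d => P.Nval d (s d) with hg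
    have hfun : (fun d => P.Nval d (s' d)) =
        Function.update (Function.update g c 0) c' (P.Nval c' (some m)) := by
      funext d
      by_cases h1 : d = c'
      · subst h1; simp [hs', Function.update_self]
      · by_cases h2 : d = c
        · subst h2
          simp [hs', Function.update_of_ne h1, Function.update_self, PSN.Nval]
        · simp [hs', Function.update_of_ne h1, Function.update_of_ne h2, hg]
    have hsum' : P.wt s' = P.Nval c' (some m) +
        ∑ d ∈ (Finset.univ.erase c').erase c, g d := by
      rw [PSN.wt]
      rw [show (∑ d : P.Chan, P.Nval d (s' d)) = ∑ d : P.Chan,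
        Function.update (Function.update g c 0) c' (P.Nval c' (some m)) d from by
          rw [← hfun]]
      rw [Finset.sum_update_of_mem (Finset.mem_univ c')]
      congr 1
      rw [← Finset.erase_eq,
        Finset.sum_update_of_mem (Finset.mem_erase.2 ⟨hcc', Finset.mem_univ c⟩)]
      simp [Finset.erase_eq]
    have hsum : P.wt s = P.Nval c (some m) +
        ∑ d ∈ (Finset.univ.erase c').erase c, g d := by
      rw [PSN.wt]
      have h1 : (∑ d : P.Chan, P.Nval d (s d)) =
          g c' + ∑ d ∈ Finset.univ.erase c', g d :=
        (Finset.add_sum_erase _ g (Finset.mem_univ c')).symm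
      have h2 : (∑ d ∈ Finset.univ.erase c', g d) =
          g c + ∑ d ∈ (Finset.univ.erase c').erase c, g d :=
        (Finset.add_sum_erase _ g (Finset.mem_erase.2 ⟨hcc', Finset.mem_univ c⟩)).symm
      have hgc' : g c' = 0 := by simp [hg, hsc', PSN.Nval]
      have hgc : g c = P.Nval c (some m) := by simp [hg, hsc]
      rw [h1, h2, hgc', hgc, zero_add]
    rw [hsum', hsum]
    exact Nat.add_lt_add_right (P.Nval_proc hc m hm c htc) _
  · -- receive step
    have h1 : P.wt s' = ∑ d ∈ Finset.univ.erase c, P.Nval d (s d) := by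
      rw [PSN.wt]
      have : (fun d => P.Nval d (s' d)) =
          Function.update (fun d => P.Nval d (s d)) c 0 := by
        funext d
        by_cases h2 : d = c
        · subst h2; simp [hs', PSN.Nval]
        · simp [hs', Function.update_of_ne h2]
      rw [show (∑ d : P.Chan, P.Nval d (s' d)) = ∑ d : P.Chan,
        Function.update (fun d => P.Nval d (s d)) c 0 d from by rw [← this]]
      rw [Finset.sum_update_of_mem (Finset.mem_univ c)]
      simp [← Finset.erase_eq]
    have h2 : P.wt s = P.Nval c (s c) + ∑ d ∈ Finset.univ.erase c, P.Nval d (s d) :=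
      (Finset.add_sum_erase _ _ (Finset.mem_univ c)).symm
    rw [h1, h2, hsc, P.Nval_recv m c htc]
    omega
end

section
/- From every state s of a correct packet switching network there exists a state s' reachable from s using only process and receive steps such that no process or receive step is enabled in s'; i.e., the number of consecutive process/receive steps from any state is bounded. -/
namespace PSN

variable (P : PSN)

lemma target_iterate (m : P.Node) (l : ℕ) (c : P.Chan) :
    P.target ((P.nextC m)^[l] c) = (P.nexthop m)^[l] (P.target c) := by
  induction l generalizing c with
  | zero => rfl
  | succ l ih =>
    rw [Function.iterate_succ_apply, ih, Function.iterate_succ_apply]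
    rfl

lemma wt_decrease (hc : P.Correct) {s s' : P.State} (h : P.stepPR s s') :
    P.wt s' < P.wt s := by
  classical
  rcases h with ⟨m, c, hm, hsc, htc, hne, hs'⟩ | ⟨m, c, hm, hsc, htc, hs'⟩
  · -- process step
    set d := P.nextC m c with hd
    have hcd : c ≠ d := by
      intro hcd; rw [← hcd] at hne; rw [hsc] at hne; exact Option.some_ne_none m hne
    have hs'c : s' c = none := by
      rw [hs', Function.update_of_ne hcd, Function.update_self]
    have hs'd : s' d = some m := by
      rw [hs', Function.update_self]
    have hs'x : ∀ x, x ≠ c → x ≠ d → s' x = s x := by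
      intro x hx1 hx2
      rw [hs', Function.update_of_ne hx2, Function.update_of_ne hx1]
    -- the sets of hop counts
    have hSne : {l | P.target ((P.nextC m)^[l] c) = m}.Nonempty := by
      obtain ⟨k, hk⟩ := hc m hm (P.target c)
      exact ⟨k, by rw [Set.mem_setOf_eq, target_iterate, hk]⟩
    have h0 : (0 : ℕ) ∉ {l | P.target ((P.nextC m)^[l] c) = m} := by
      simpa using htc
    have hmem := Nat.sInf_mem hSne
    have hpos : 1 ≤ sInf {l | P.target ((P.nextC m)^[l] c) = m} := by
      rcases Nat.eq_zero_or_pos (sInf {l | P.target ((P.nextC m)^[l] c) = m}) with h | h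
      · exact absurd (h ▸ hmem) h0
      · exact h
    obtain ⟨k, hk⟩ : ∃ k, sInf {l | P.target ((P.nextC m)^[l] c) = m} = k + 1 :=
      ⟨_, (Nat.succ_pred_eq_of_pos hpos).symm⟩
    have hkd : k ∈ {l | P.target ((P.nextC m)^[l] d) = m} := by
      have : P.target ((P.nextC m)^[k+1] c) = m := by rw [← hk]; exact hmem
      rwa [Function.iterate_succ_apply] at this
    have hlt : sInf {l | P.target ((P.nextC m)^[l] d) = m}
        < sInf {l | P.target ((P.nextC m)^[l] c) = m} := by
      have := Nat.sInf_le hkd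
      omega
    -- sum manipulation
    have hdmem : d ∈ (Finset.univ : Finset P.Chan).erase c :=
      Finset.mem_erase.2 ⟨fun h => hcd h.symm, Finset.mem_univ d⟩
    have split : ∀ t : P.State, P.wt t =
        (∑ x ∈ (Finset.univ.erase c).erase d, P.Nval x (t x))
          + P.Nval d (t d) + P.Nval c (t c) := by
      intro t
      rw [wt, ← Finset.sum_erase_add _ _ (Finset.mem_univ c),
        ← Finset.sum_erase_add _ _ hdmem]
    rw [split s, split s', hs'c, hs'd, hsc,
      Finset.sum_congr rfl (fun x hx => by
        rw [hs'x x (Finset.mem_erase.1 (Finset.mem_of_mem_erase hx)).1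
          (Finset.mem_erase.1 hx).1])]
    have hnd : s d = none := hne
    rw [hnd]
    simp only [Nval]
    omega
  · -- receive step
    have hs'c : s' c = none := by rw [hs', Function.update_self]
    apply Finset.sum_lt_sum
    · intro x _
      by_cases hx : x = c
      · subst hx; rw [hs'c]; simp [Nval]
      · rw [hs', Function.update_of_ne hx]
    · refine ⟨c, Finset.mem_univ c, ?_⟩
      rw [hs'c, hsc]
      simp [Nval]

end PSN

/-- From every state, a state with no enabled process or receive step is
reachable using only process and receive steps. -/
theorem stmt8 (P : PSN) (hc : P.Correct) (s : P.State) :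
    ∃ s', Relation.ReflTransGen P.stepPR s s' ∧ ∀ t, ¬ P.stepPR s' t := by
  classical
  suffices H : ∀ n (s : P.State), P.wt s ≤ n →
      ∃ s', Relation.ReflTransGen P.stepPR s s' ∧ ∀ t, ¬ P.stepPR s' t from
    H (P.wt s) s le_rfl
  intro n
  induction n with
  | zero =>
    intro s hs
    refine ⟨s, Relation.ReflTransGen.refl, fun t ht => ?_⟩
    have := P.wt_decrease hc ht
    omega
  | succ n ih =>
    intro s hs
    by_cases h : ∃ t, P.stepPR s t
    · obtain ⟨t, ht⟩ := h
      have hlt := P.wt_decrease hc ht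
      obtain ⟨s', h1, h2⟩ := ih t (by omega)
      exact ⟨s', Relation.ReflTransGen.head ht h1, h2⟩
    · exact ⟨s, Relation.ReflTransGen.refl, fun t ht => h ⟨t, ht⟩⟩
end

section
/- In a correct packet switching network, every weak deadlock is a local deadlock: W(K) ⊆ L(K). More precisely, if s ∉ I and no process or receive step is enabled in s, then for every nonempty channel c in s, s ∈ L_c(K). -/
private lemma frozen (P : PSN) (s : P.State) (hs : P.weakDeadlock s)
    {s' : P.State} (h : Relation.ReflTransGen P.step s s') :
    ∀ c, s c ≠ none → s' c = s c := by
  induction h with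
  | refl => intro c _; rfl
  | tail hab hbc ih =>
    rename_i b t
    intro c hcne
    rcases hbc with (hspr | ⟨heq, _⟩)
    · rcases hspr with (⟨m, m', _, hm', hne, hemp, ht⟩ | ⟨m, ch, hmM, hbch, htgt, hemp, ht⟩ |
        ⟨m, ch, hmM, hbch, htgt, ht⟩)
      · -- send step
        subst ht
        have hc' : c ≠ P.rout m m' := by
          intro h; rw [← h, ih c hcne] at hemp; exact hcne hemp
        rw [Function.update_of_ne hc', ih c hcne]
      · -- proc step
        subst ht
        have hnx : c ≠ P.nextC m ch := by
          intro h; rw [← h, ih c hcne] at hemp; exact hcne hemp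
        have hch : c ≠ ch := by
          intro h
          subst h
          have hsc : s c = some m := by rw [← ih c hcne]; exact hbch
          -- show proc step enabled from s, contradiction
          have hsn : s (P.nextC m c) = none := by
            by_contra hne2
            rw [ih _ hne2] at hemp
            exact hne2 hemp
          exact absurd (Or.inl ⟨m, c, hmM, hsc, htgt, hsn, rfl⟩) (hs.2 _)
        rw [Function.update_of_ne hnx, Function.update_of_ne hch, ih c hcne]
      · -- recv step
        subst ht
        have hch : c ≠ ch := by
          intro h
          subst h
          have hsc : s c = some m := by rw [← ih c hcne]; exact hbch
          exact absurd (Or.inr ⟨m, c, hmM, hsc, htgt, rfl⟩) (hs.2 _)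
        rw [Function.update_of_ne hch, ih c hcne]
    · rw [← heq]; exact ih c hcne

/-- Every weak deadlock is a local deadlock: W(K) ⊆ L(K); more precisely,
every nonempty channel of a weak deadlock state is locally deadlocked. -/
theorem stmt9 (P : PSN) (hc : P.Correct) (s : P.State) (hs : P.weakDeadlock s) :
    P.localDeadlock s ∧ ∀ c, s c ≠ none → P.localDeadlockAt c s := by
  have key : ∀ c, s c ≠ none → P.localDeadlockAt c s := by
    intro c hcne s' hreach
    exact ⟨hcne, frozen P s hs hreach c hcne⟩
  refine ⟨?_, key⟩
  have : ¬ ∀ c, s c = none := hs.1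
  push_neg at this
  obtain ⟨c, hc'⟩ := this
  exact ⟨c, key c hc'⟩
end

section
/- There exists a correct packet switching network and a reachable state of it that is a local deadlock but not a weak deadlock. -/
@[reducible] def myP : PSN where
  Node := Fin 4
  Chan := Fin 5
  fintypeNode := inferInstance
  decEqNode := inferInstance
  fintypeChan := inferInstance
  decEqChan := inferInstance
  M := Finset.univ
  hM := by decide
  source := ![0, 1, 2, 3, 1]
  target := ![1, 2, 3, 0, 0]
  rout := fun n m => if n = 1 ∧ m = 0 then 4 else n.castSucc
  rout_source := by decide

/-- The locally deadlocked state. -/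
def sDead : myP.State := show Fin 5 → Option (Fin 4) from ![some 2, some 3, some 0, some 1, some 0]

/-- Invariant: the four ring channels keep their contents. -/
def RingInv (t : myP.State) : Prop :=
  letI t : Fin 5 → Option (Fin 4) := t
  t 0 = some 2 ∧ t 1 = some 3 ∧ t 2 = some 0 ∧ t 3 = some 1

lemma inv_sDead : RingInv sDead := ⟨rfl, rfl, rfl, rfl⟩

lemma inv_step {t t' : myP.State} (hI : RingInv t) (h : myP.step t t') : RingInv t' := by
  obtain ⟨h0, h1, h2, h3⟩ := hI
  rcases h with (h | h | h) | ⟨rfl, -⟩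
  · -- send step
    obtain ⟨m, m', -, -, -, hemp, rfl⟩ := h
    refine ⟨?_, ?_, ?_, ?_⟩ <;>
      [ rw [Function.update_of_ne (fun h => by rw [← h, h0] at hemp; exact Option.some_ne_none _ hemp), h0];
        rw [Function.update_of_ne (fun h => by rw [← h, h1] at hemp; exact Option.some_ne_none _ hemp), h1];
        rw [Function.update_of_ne (fun h => by rw [← h, h2] at hemp; exact Option.some_ne_none _ hemp), h2];
        rw [Function.update_of_ne (fun h => by rw [← h, h3] at hemp; exact Option.some_ne_none _ hemp), h3] ]
  · -- process step: impossible
    exfalso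
    obtain ⟨m, c, -, hc, htgt, hnext, -⟩ := h
    fin_cases c
    · replace hc : t 0 = some m := hc
      rw [h0] at hc; obtain rfl := Option.some_injective _ hc.symm
      replace hnext : t 1 = none := hnext
      rw [h1] at hnext; exact Option.some_ne_none _ hnext
    · replace hc : t 1 = some m := hc
      rw [h1] at hc; obtain rfl := Option.some_injective _ hc.symm
      replace hnext : t 2 = none := hnext
      rw [h2] at hnext; exact Option.some_ne_none _ hnext
    · replace hc : t 2 = some m := hc
      rw [h2] at hc; obtain rfl := Option.some_injective _ hc.symm
      replace hnext : t 3 = none := hnext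
      rw [h3] at hnext; exact Option.some_ne_none _ hnext
    · replace hc : t 3 = some m := hc
      rw [h3] at hc; obtain rfl := Option.some_injective _ hc.symm
      replace hnext : t 0 = none := hnext
      rw [h0] at hnext; exact Option.some_ne_none _ hnext
    · replace hnext : t 0 = none := hnext
      rw [h0] at hnext; exact Option.some_ne_none _ hnext
  · -- receive step: only possible on channel 4
    obtain ⟨m, c, -, hc, htgt, rfl⟩ := h
    have hc4 : c = 4 := by
      fin_cases c
      · replace hc : t 0 = some m := hc
        rw [h0] at hc; obtain rfl := Option.some_injective _ hc.symm
        exact absurd (show myP.target 0 = 2 from htgt) (by decide)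
      · replace hc : t 1 = some m := hc
        rw [h1] at hc; obtain rfl := Option.some_injective _ hc.symm
        exact absurd (show myP.target 1 = 3 from htgt) (by decide)
      · replace hc : t 2 = some m := hc
        rw [h2] at hc; obtain rfl := Option.some_injective _ hc.symm
        exact absurd (show myP.target 2 = 0 from htgt) (by decide)
      · replace hc : t 3 = some m := hc
        rw [h3] at hc; obtain rfl := Option.some_injective _ hc.symm
        exact absurd (show myP.target 3 = 1 from htgt) (by decide)
      · rfl
    subst hc4
    exact ⟨by rw [Function.update_of_ne (by decide), h0],
           by rw [Function.update_of_ne (by decide), h1],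
           by rw [Function.update_of_ne (by decide), h2],
           by rw [Function.update_of_ne (by decide), h3]⟩
  · exact ⟨h0, h1, h2, h3⟩

lemma inv_reach {t : myP.State} (h : Relation.ReflTransGen myP.step sDead t) : RingInv t := by
  induction h with
  | refl => exact inv_sDead
  | tail _ hstep ih => exact inv_step ih hstep

lemma sDead_reachable : myP.reachable sDead := by
  refine ⟨fun _ => none, fun _ => rfl, ?_⟩
  have step1 : myP.step (fun _ => none) ![some 2, none, none, none, none] :=
    Or.inl (Or.inl ⟨0, 2, Finset.mem_univ _, Finset.mem_univ _, by decide, rfl,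
      by funext c; fin_cases c <;> rfl⟩)
  have step2 : myP.step ![some 2, none, none, none, none] ![some 2, some 3, none, none, none] :=
    Or.inl (Or.inl ⟨1, 3, Finset.mem_univ _, Finset.mem_univ _, by decide, rfl,
      by funext c; fin_cases c <;> rfl⟩)
  have step3 : myP.step ![some 2, some 3, none, none, none] ![some 2, some 3, some 0, none, none] :=
    Or.inl (Or.inl ⟨2, 0, Finset.mem_univ _, Finset.mem_univ _, by decide, rfl,
      by funext c; fin_cases c <;> rfl⟩)
  have step4 : myP.step ![some 2, some 3, some 0, none, none] ![some 2, some 3, some 0, some 1, none] :=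
    Or.inl (Or.inl ⟨3, 1, Finset.mem_univ _, Finset.mem_univ _, by decide, rfl,
      by funext c; fin_cases c <;> rfl⟩)
  have step5 : myP.step ![some 2, some 3, some 0, some 1, none] sDead :=
    Or.inl (Or.inl ⟨1, 0, Finset.mem_univ _, Finset.mem_univ _, by decide, rfl,
      by funext c; fin_cases c <;> rfl⟩)
  exact .tail (.tail (.tail (.tail (.single step1) step2) step3) step4) step5

/-- There is a correct packet switching network with a reachable state that is
a local deadlock but not a weak deadlock. -/
theorem stmt14 :
    ∃ P : PSN, P.Correct ∧ ∃ s : P.State,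
      P.reachable s ∧ P.localDeadlock s ∧ ¬ P.weakDeadlock s := by
  refine ⟨myP, ?_, sDead, sDead_reachable, ?_, ?_⟩
  · have h : ∀ m n : Fin 4, ∃ k : Fin 5, (myP.nexthop m)^[k.1] n = m := by decide
    intro m _ n
    exact ⟨(h m n).choose.1, (h m n).choose_spec⟩
  · refine ⟨0, fun s' hs' => ?_⟩
    have hI := inv_reach hs'
    exact ⟨by rw [show sDead 0 = some 2 from rfl]; simp, hI.1.trans rfl⟩
  · rintro ⟨-, h⟩
    exact h (Function.update sDead 4 none)
      (Or.inr ⟨0, 4, Finset.mem_univ _, rfl, rfl, rfl⟩)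
end

section
/- There exists a correct packet switching network and a reachable state of it that is a weak deadlock but not a global deadlock. -/
-- Witness network: nodes `Fin 4` (node i ↦ index i-1), channels `Fin 5`.
def Wsource : Fin 5 → Fin 4 := ![0, 1, 2, 3, 1]
def Wtarget : Fin 5 → Fin 4 := ![1, 2, 3, 0, 0]
def Wrout : Fin 4 → Fin 4 → Fin 5 := fun n m =>
  if n = 1 ∧ m = 0 then 4 else n.castSucc

def WP : PSN where
  Node := Fin 4
  Chan := Fin 5
  fintypeNode := inferInstance
  decEqNode := inferInstance
  fintypeChan := inferInstance
  decEqChan := inferInstance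
  M := Finset.univ
  hM := by decide
  source := Wsource
  target := Wtarget
  rout := Wrout
  rout_source := by decide

-- the deadlocked state
def Wst : WP.State :=
  ![some (2 : Fin 4), some (3 : Fin 4), some (0 : Fin 4), some (1 : Fin 4), none]

lemma Wstep_of_send {s s' : WP.State} (h : WP.sendStep s s') : WP.step s s' :=
  Or.inl (Or.inl h)

theorem stmt15' :
    ∃ P : PSN, P.Correct ∧ ∃ s : P.State,
      P.reachable s ∧ P.weakDeadlock s ∧ ¬ P.globalDeadlock s := by
  refine ⟨WP, ?_, Wst, ?_, ?_, ?_⟩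
  · -- Correct
    intro m _ n
    have h : ∀ m n : Fin 4, ∃ k, k < 5 ∧ (WP.nexthop m)^[k] n = m := by unfold WP; decide
    obtain ⟨k, _, hk⟩ := h m n
    exact ⟨k, hk⟩
  · -- reachable
    refine ⟨(fun _ => none), fun c => rfl, ?_⟩
    set s0 : WP.State := fun _ => none with hs0
    set s1 : WP.State := Function.update s0 ((0 : Fin 5) : WP.Chan) (some ((2 : Fin 4) : WP.Node)) with hs1
    set s2 : WP.State := Function.update s1 ((1 : Fin 5) : WP.Chan) (some ((3 : Fin 4) : WP.Node)) with hs2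
    set s3 : WP.State := Function.update s2 ((2 : Fin 5) : WP.Chan) (some ((0 : Fin 4) : WP.Node)) with hs3
    have step1 : WP.step s0 s1 := by
      refine Wstep_of_send ⟨(0 : Fin 4), (2 : Fin 4), Finset.mem_univ _, Finset.mem_univ _, by exact Fin.ne_of_val_ne (by decide), rfl, ?_⟩
      rw [hs1]; rfl
    have step2 : WP.step s1 s2 := by
      refine Wstep_of_send ⟨(1 : Fin 4), (3 : Fin 4), Finset.mem_univ _, Finset.mem_univ _, by exact Fin.ne_of_val_ne (by decide), ?_, ?_⟩
      · rw [hs1]; decide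
      · rw [hs2]; rfl
    have step3 : WP.step s2 s3 := by
      refine Wstep_of_send ⟨(2 : Fin 4), (0 : Fin 4), Finset.mem_univ _, Finset.mem_univ _, by exact Fin.ne_of_val_ne (by decide), ?_, ?_⟩
      · rw [hs2]; decide
      · rw [hs3]; rfl
    have step4 : WP.step s3 Wst := by
      refine Wstep_of_send ⟨(3 : Fin 4), (1 : Fin 4), Finset.mem_univ _, Finset.mem_univ _, by exact Fin.ne_of_val_ne (by decide), ?_, ?_⟩
      · rw [hs3]; decide
      · rw [hs3, hs2, hs1, hs0]
        funext c
        have : ∀ c : Fin 5, Wst c =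
            Function.update (Function.update (Function.update (Function.update
              (fun _ => none) ((0 : Fin 5) : WP.Chan) (some ((2:Fin 4) : WP.Node)))
              ((1 : Fin 5) : WP.Chan) (some ((3:Fin 4) : WP.Node)))
              ((2 : Fin 5) : WP.Chan) (some ((0:Fin 4) : WP.Node)))
              (WP.rout (3:Fin 4) (1:Fin 4)) (some ((1:Fin 4) : WP.Node)) c := by unfold Wst WP; decide
        exact this c
    exact Relation.ReflTransGen.head step1 (Relation.ReflTransGen.head step2
      (Relation.ReflTransGen.head step3 (Relation.ReflTransGen.single step4)))
  · -- weak deadlock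
    constructor
    · intro h
      have := h ((0 : Fin 5) : WP.Chan)
      revert this; decide
    · rintro s' (⟨m, c, _, h1, h2, h3, _⟩ | ⟨m, c, _, h1, h2, _⟩)
      · have : ∀ (m : Fin 4) (c : Fin 5), ¬ (Wst c = some m ∧ WP.target c ≠ m ∧ Wst (WP.nextC m c) = none) := by
          unfold Wst WP; decide
        exact this m c ⟨h1, h2, h3⟩
      · have : ∀ (m : Fin 4) (c : Fin 5), ¬ (Wst c = some m ∧ WP.target c = m) := by unfold Wst WP; decide
        exact this m c ⟨h1, h2⟩
  · -- not global deadlock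
    intro h
    have hs : WP.step Wst (Function.update Wst (WP.rout (1:Fin 4) (0:Fin 4)) (some ((0:Fin 4) : WP.Node))) := by
      refine Wstep_of_send ⟨(1 : Fin 4), (0 : Fin 4), Finset.mem_univ _, Finset.mem_univ _, by exact Fin.ne_of_val_ne (by decide), by decide, rfl⟩
    have := h _ hs
    have h4 := congrFun this (WP.rout (1:Fin 4) (0:Fin 4))
    revert h4
    decide

/-- There is a correct packet switching network with a reachable state that is
a weak deadlock but not a global deadlock. -/
theorem stmt15 :
    ∃ P : PSN, P.Correct ∧ ∃ s : P.State,
      P.reachable s ∧ P.weakDeadlock s ∧ ¬ P.globalDeadlock s := stmt15'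
end

section
/- If in some state s of a packet switching network some channel is nonempty and no process or receive step is enabled, then for every state s' with s →* s', every channel that is nonempty in s has the same content in s'; consequently a weak deadlock persists forever on its blocked channels. -/
/-- If some channel is nonempty and no process or receive step is enabled,
then along every execution every channel that is nonempty keeps its content:
a weak deadlock persists forever on its blocked channels. -/
theorem stmt17 (P : PSN) (s : P.State)
    (h1 : ∃ c, s c ≠ none) (h2 : ∀ s', ¬ P.stepPR s s') :
    ∀ s', Relation.ReflTransGen P.step s s' →
      ∀ c, s c ≠ none → s' c = s c := by
  intro s' hst
  induction hst with
  | refl => intro c _; rfl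
  | tail hab hbc ih =>
    rename_i b t
    intro d hd
    have hb := ih d hd
    rcases hbc with (hs | hp | hr) | ⟨rfl, _⟩
    · obtain ⟨m, m', hm, hm', hne, hempty, rfl⟩ := hs
      rw [Function.update_of_ne, hb]
      rintro rfl
      rw [hb] at hempty
      exact hd hempty
    · obtain ⟨m, c, hm, hc, htg, hnext, rfl⟩ := hp
      have hdne : d ≠ P.nextC m c := by
        rintro rfl
        rw [hb] at hnext
        exact hd hnext
      have hdnc : d ≠ c := by
        rintro rfl
        have hsd : s d = some m := by rw [← hb]; exact hc
        have hsn : s (P.nextC m d) = none := by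
          by_contra hne2
          rw [ih _ hne2] at hnext
          exact hne2 hnext
        exact h2 _ (Or.inl ⟨m, d, hm, hsd, htg, hsn, rfl⟩)
      rw [Function.update_of_ne hdne, Function.update_of_ne hdnc, hb]
    · obtain ⟨m, c, hm, hc, htg, rfl⟩ := hr
      have hdnc : d ≠ c := by
        rintro rfl
        have hsd : s d = some m := by rw [← hb]; exact hc
        exact h2 _ (Or.inr ⟨m, d, hm, hsd, htg, rfl⟩)
      rw [Function.update_of_ne hdnc, hb]
    · exact hb
end
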